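/- Let q = p^e be a power of a prime with q ≡ 1 (mod 6), set t = (q-1)/6, and let a, b be integer multiples of t. Then for every λ ∈ 𝔽_q with λ ≠ 0 and λ⁶ ≠ 1, one has Σ_{j=0}^{q-2} g(ω^{j+a})·g(ω^{-j+b})·ω^j(-1)·ω^{6j}(λ) = (q-1)·g(ω^{a+b})·ω^b(-1)·ω^{-(a+b)}(1-λ⁶). -/

import Mathlib

open scoped Classical

noncomputable section

/-- The Gauss sum `g(χ) = ∑ₓ χ(x) exp(2π√-1 · tr(x)/p)` of a multiplicative character `χ`
of a finite field `F` of characteristic `p`, where `tr : F → 𝔽_p` is the trace map. -/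
def gaussChar (p : ℕ) (F : Type) [Field F] [Fintype F] [Algebra (ZMod p) F]
    (χ : MulChar F ℂ) : ℂ :=
  ∑ x : F, χ x *
    Complex.exp (2 * Real.pi * Complex.I * ((Algebra.trace (ZMod p) F x).val : ℂ) / (p : ℂ))

/-- The Jacobi sum `J(χ₁, …, χₙ) = ∑_{x₁ + ⋯ + xₙ = 1} χ₁(x₁) ⋯ χₙ(xₙ)`. -/
def jacobiS (F : Type) [Field F] [Fintype F] {n : ℕ} (χ : Fin n → MulChar F ℂ) : ℂ :=
  ∑ v ∈ Finset.univ.filter (fun v : Fin n → F => ∑ i, v i = 1), ∏ i, χ i (v i)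

/-- The normalized Jacobi sum `binom(A; B) = (B(-1)/q) · J(A, B̄)`. -/
def gBinom (F : Type) [Field F] [Fintype F] (A B : MulChar F ℂ) : ℂ :=
  B (-1) / (Fintype.card F : ℂ) * jacobiS F ![A, B⁻¹]

/-- Greene's finite-field hypergeometric function `ₙ₊₁Fₙ` (case `n ≥ 2`), where the sum over all
multiplicative characters is written as a sum over the powers `ω^j`, `0 ≤ j ≤ q - 2`, of a fixed
generator `ω` of the character group. -/
def greeneF (F : Type) [Field F] [Fintype F] (ω : MulChar F ℂ) {n : ℕ}
    (A : Fin (n + 1) → MulChar F ℂ) (B : Fin n → MulChar F ℂ) (x : F) : ℂ :=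
  (Fintype.card F : ℂ) / ((Fintype.card F : ℂ) - 1) *
    ∑ j ∈ Finset.range (Fintype.card F - 1),
      gBinom F (A 0 * ω ^ j) (ω ^ j) *
        (∏ i : Fin n, gBinom F (A i.succ * ω ^ j) (B i * ω ^ j)) * (ω ^ j) x

/-- Greene's finite-field hypergeometric function `₂F₁` (case `n = 1`):
`₂F₁(A₀, A₁; B₁ | x) = ε(x) · (A₁B₁(-1)/q) · ∑_y A₁(y) (A̅₁B₁)(1-y) A̅₀(1-xy)`. -/
def greene2F1 (F : Type) [Field F] [Fintype F] (A₀ A₁ B₁ : MulChar F ℂ) (x : F) : ℂ :=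
  (1 : MulChar F ℂ) x * ((A₁ * B₁) (-1) / (Fintype.card F : ℂ)) *
    ∑ y : F, A₁ y * (A₁⁻¹ * B₁) (1 - y) * A₀⁻¹ (1 - x * y)

/-- The number of `F`-rational points of the Dwork hypersurface
`x₁^d + ⋯ + x_d^d = dλ x₁ ⋯ x_d` in projective space. -/
def dworkCount (F : Type) [Field F] [Fintype F] (d : ℕ) (lam : F) : ℕ :=
  Nat.card {P : Projectivization F (Fin d → F) //
    ∑ i, P.rep i ^ d = (d : F) * lam * ∏ i, P.rep i}

/-- The number of `F`-rational points of the diagonal hypersurface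
`x₁^d + ⋯ + xₙ^d = dλ x₁^{h₁} ⋯ xₙ^{hₙ}` in projective space. -/
def diagCount (F : Type) [Field F] [Fintype F] (d n : ℕ) (h : Fin n → ℕ) (lam : F) : ℕ :=
  Nat.card {P : Projectivization F (Fin n → F) //
    ∑ i, P.rep i ^ d = (d : F) * lam * ∏ i, P.rep i ^ h i}

/-- The quantity `N_q(0, w)` from Koblitz's formula, with `t = (q - 1)/d`. -/
def NqW (p : ℕ) (F : Type) [Field F] [Fintype F] [Algebra (ZMod p) F]
    (ω : MulChar F ℂ) (d : ℕ) {n : ℕ} (w : Fin n → ZMod d) : ℂ :=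
  if ∀ i, w i = 0 then ((Fintype.card F : ℂ) ^ (n - 1) - 1) / ((Fintype.card F : ℂ) - 1)
  else if ∀ i, w i ≠ 0 then
    (1 / (Fintype.card F : ℂ)) *
      ∏ i, gaussChar p F (ω ^ ((w i).val * ((Fintype.card F - 1) / d)))
  else 0

/-- The quantity `S_{[w]} = (q-1)⁻¹ ∑_{j=0}^{q-2} (∏ᵢ g(ω^{wᵢt + hᵢj}) / g(ω^{dj})) ω^{dj}(dλ)`
from Koblitz's formula, with `t = (q - 1)/d`. -/
def SW (p : ℕ) (F : Type) [Field F] [Fintype F] [Algebra (ZMod p) F]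
    (ω : MulChar F ℂ) (d : ℕ) {n : ℕ} (h : Fin n → ℕ) (w : Fin n → ZMod d) (lam : F) : ℂ :=
  ((Fintype.card F : ℂ) - 1)⁻¹ *
    ∑ j ∈ Finset.range (Fintype.card F - 1),
      (∏ i, gaussChar p F (ω ^ ((w i).val * ((Fintype.card F - 1) / d) + h i * j))) /
          gaussChar p F (ω ^ (d * j)) * (ω ^ (d * j)) ((d : F) * lam)

end

section AuxLemmas

/-- The additive character `x ↦ exp(2πi·tr(x)/p)` is additive. -/
lemma aux_psi_add (p : ℕ) [Fact p.Prime] (F : Type) [Field F] [Fintype F] [Algebra (ZMod p) F]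
    (x y : F) :
    Complex.exp (2 * Real.pi * Complex.I * ((Algebra.trace (ZMod p) F (x + y)).val : ℂ) / p) =
      Complex.exp (2 * Real.pi * Complex.I * ((Algebra.trace (ZMod p) F x).val : ℂ) / p) *
        Complex.exp (2 * Real.pi * Complex.I * ((Algebra.trace (ZMod p) F y).val : ℂ) / p) := by
  have hp : (p : ℂ) ≠ 0 := Nat.cast_ne_zero.mpr (Fact.out (p := p.Prime)).pos.ne'
  set A := Algebra.trace (ZMod p) F x with hA
  set B := Algebra.trace (ZMod p) F y with hB
  have htr : Algebra.trace (ZMod p) F (x + y) = A + B := map_add _ x y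
  rw [htr, ← Complex.exp_add]
  set k : ℕ := (A.val + B.val) / p with hk
  have hval : A.val + B.val = (A + B).val + p * k := by
    rw [ZMod.val_add]; exact (Nat.mod_add_div _ _).symm
  have hval' : ((A.val : ℂ) + B.val) = ((A + B).val : ℂ) + (p : ℂ) * (k : ℂ) := by
    exact_mod_cast congrArg (Nat.cast : ℕ → ℂ) hval
  have hexp : 2 * Real.pi * Complex.I * ((A.val : ℂ)) / p
        + 2 * Real.pi * Complex.I * ((B.val : ℂ)) / p
      = 2 * Real.pi * Complex.I * (((A + B).val : ℂ)) / p
        + (k : ℂ) * (2 * Real.pi * Complex.I) := by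
    rw [← add_div, ← mul_add, hval', mul_add, add_div]
    congr 1
    rw [mul_comm (p : ℂ) (k : ℂ), ← mul_assoc, mul_div_assoc, div_self hp, mul_one, mul_comm]
  rw [hexp, Complex.exp_add]
  have h1 : Complex.exp ((k : ℂ) * (2 * Real.pi * Complex.I)) = 1 := by
    have h := Complex.exp_int_mul_two_pi_mul_I (k : ℤ)
    push_cast at h
    exact h
  rw [h1, mul_one]

/-- Orthogonality: summing a generator's powers at `u` detects `u = 1`. -/
lemma aux_orth (q : ℕ) (F : Type) [Field F] [Fintype F] (hq : q = Fintype.card F)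
    (ω : MulChar F ℂ) (hω : ∀ χ : MulChar F ℂ, ∃ j : ℕ, χ = ω ^ j) (u : F) :
    ∑ j ∈ Finset.range (q - 1), (ω ^ j) u = if u = 1 then ((q : ℂ) - 1) else 0 := by
  have hq1 : 1 ≤ q := hq ▸ Fintype.card_pos
  by_cases hu1 : u = 1
  · subst hu1
    rw [if_pos rfl]
    have : ∀ j ∈ Finset.range (q - 1), (ω ^ j) (1 : F) = 1 := fun j _ => MulChar.map_one _
    rw [Finset.sum_congr rfl this, Finset.sum_const, Finset.card_range, nsmul_eq_mul, mul_one,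
      Nat.cast_sub hq1, Nat.cast_one]
  · rw [if_neg hu1]
    by_cases hu0 : u = 0
    · subst hu0
      have : ∀ j ∈ Finset.range (q - 1), (ω ^ j) (0 : F) = 0 := fun j _ =>
        MulChar.map_zero _
      rw [Finset.sum_congr rfl this, Finset.sum_const, smul_zero]
    · have hu : IsUnit u := isUnit_iff_ne_zero.mpr hu0
      have hterm : ∀ j : ℕ, (ω ^ j) u = (ω u) ^ j := fun j => by
        conv_lhs => rw [← hu.unit_spec]
        rw [MulChar.pow_apply_coe, hu.unit_spec]
      have hpow : (ω u) ^ (q - 1) = 1 := by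
        rw [← map_pow, hq, FiniteField.pow_card_sub_one_eq_one u hu0, MulChar.map_one]
      have hne : ω u ≠ 1 := by
        haveI : NeZero ((Monoid.exponent Fˣ : ℕ) : ℂ) :=
          ⟨Nat.cast_ne_zero.mpr Monoid.exponent_ne_zero_of_finite⟩
        obtain ⟨χ, hχ⟩ := MulChar.exists_apply_ne_one_of_hasEnoughRootsOfUnity F ℂ hu1
        obtain ⟨j, rfl⟩ := hω χ
        intro h
        exact hχ (by rw [hterm j, h, one_pow])
      calc ∑ j ∈ Finset.range (q - 1), (ω ^ j) u
          = ∑ j ∈ Finset.range (q - 1), (ω u) ^ j :=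
            Finset.sum_congr rfl fun j _ => hterm j
        _ = ((ω u) ^ (q - 1) - 1) / (ω u - 1) := geom_sum_eq hne _
        _ = 0 := by rw [hpow, sub_self, zero_div]

end AuxLemmas

/-- Lemma 3.3: a Gauss-sum identity used in the proof of the main theorem. -/
theorem gauss_sum_lambda_identity (p e q t : ℕ) [Fact p.Prime] (F : Type) [Field F] [Fintype F]
    [Algebra (ZMod p) F]
    (he : 0 < e) (hq : q = Fintype.card F) (hqe : q = p ^ e) (hmod : q % 6 = 1)
    (ht : t = (q - 1) / 6)
    (ω : MulChar F ℂ) (hω : ∀ χ : MulChar F ℂ, ∃ j : ℕ, χ = ω ^ j)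
    (a b : ℤ) (ha : (t : ℤ) ∣ a) (hb : (t : ℤ) ∣ b)
    (lam : F) (hlam : lam ≠ 0) (hlam6 : lam ^ 6 ≠ 1) :
    ∑ j ∈ Finset.range (q - 1),
        gaussChar p F (ω ^ ((j : ℤ) + a)) * gaussChar p F (ω ^ (-(j : ℤ) + b)) *
          (ω ^ (j : ℤ)) (-1) * (ω ^ (6 * (j : ℤ))) lam =
      ((q : ℂ) - 1) * gaussChar p F (ω ^ (a + b)) * (ω ^ b) (-1) *
        (ω ^ (-(a + b))) (1 - lam ^ 6) := by
  classical
  have hq1 : 1 ≤ q := by omega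
  have h6t : 6 * t = q - 1 := by omega
  have h6tZ : (6 : ℤ) * (t : ℤ) = (q : ℤ) - 1 := by
    have := congrArg (Nat.cast : ℕ → ℤ) h6t
    push_cast [Nat.cast_sub hq1] at this
    linarith
  set ψ : F → ℂ := fun x =>
    Complex.exp (2 * Real.pi * Complex.I * ((Algebra.trace (ZMod p) F x).val : ℂ) / p) with hψdef
  have hψadd : ∀ x y : F, ψ (x + y) = ψ x * ψ y := fun x y => aux_psi_add p F x y
  have hgauss : ∀ χ : MulChar F ℂ, gaussChar p F χ = ∑ x : F, χ x * ψ x := fun χ => rfl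
  -- the trivial-character step : ω ^ (q-1) = 1
  have hord : ω ^ ((q : ℤ) - 1) = 1 := by
    have hordn : ω ^ (q - 1 : ℕ) = (1 : MulChar F ℂ) := by
      ext a
      rw [MulChar.pow_apply_coe, MulChar.one_apply_coe, ← map_pow]
      have : (a : F) ^ (q - 1 : ℕ) = 1 := by
        rw [hq]; exact FiniteField.pow_card_sub_one_eq_one (a : F) a.ne_zero
      rw [this, MulChar.map_one]
    calc ω ^ ((q : ℤ) - 1) = ω ^ (((q - 1 : ℕ) : ℤ)) := by
          rw [Nat.cast_sub hq1, Nat.cast_one]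
      _ = ω ^ (q - 1 : ℕ) := zpow_natCast ω _
      _ = 1 := hordn
  have hb6 : (ω ^ b) (lam ^ 6) = 1 := by
    obtain ⟨k, hk⟩ := hb
    have h6b : ω ^ (6 * b) = 1 := by
      rw [hk, show (6 : ℤ) * ((t : ℤ) * k) = ((q : ℤ) - 1) * k by rw [← h6tZ]; ring,
        zpow_mul, hord, one_zpow]
    have hlamu : IsUnit lam := isUnit_iff_ne_zero.mpr hlam
    have : (ω ^ b) (lam ^ 6) = (ω ^ (6 * b)) lam := by
      rw [map_pow, show (6 : ℤ) * b = b * ((6 : ℕ) : ℤ) by push_cast; ring, zpow_mul,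
        zpow_natCast, MulChar.pow_apply' _ (by norm_num : (6 : ℕ) ≠ 0)]
    rw [this, h6b, MulChar.one_apply hlamu]
  -- the collected coefficient
  set C : F → F → ℂ := fun x y => (ω ^ a) x * (ω ^ b) y * (ψ x * ψ y) with hC
  -- Step 1 : expand the Gauss sums and collect the `j`-dependence
  have expand : ∀ j ∈ Finset.range (q - 1),
      gaussChar p F (ω ^ ((j : ℤ) + a)) * gaussChar p F (ω ^ (-(j : ℤ) + b)) *
          (ω ^ (j : ℤ)) (-1) * (ω ^ (6 * (j : ℤ))) lam
        = ∑ x : F, ∑ y : F, (ω ^ j) (x * y⁻¹ * (-1) * lam ^ 6) * C x y := by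
    intro j _
    rw [hgauss, hgauss, Finset.sum_mul_sum]
    rw [Finset.sum_mul, Finset.sum_mul]
    refine Finset.sum_congr rfl fun x _ => ?_
    rw [Finset.sum_mul, Finset.sum_mul]
    refine Finset.sum_congr rfl fun y _ => ?_
    have h1 : (ω ^ ((j : ℤ) + a)) x = (ω ^ j) x * (ω ^ a) x := by
      rw [zpow_add, MulChar.mul_apply, zpow_natCast]
    have h2 : (ω ^ (-(j : ℤ) + b)) y = (ω ^ j) y⁻¹ * (ω ^ b) y := by
      rw [zpow_add, MulChar.mul_apply, zpow_neg, MulChar.inv_apply', zpow_natCast]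
    have h3 : (ω ^ (j : ℤ)) (-1 : F) = (ω ^ j) (-1 : F) := by rw [zpow_natCast]
    have h4 : (ω ^ (6 * (j : ℤ))) lam = (ω ^ j) (lam ^ 6) := by
      rw [show (6 : ℤ) * (j : ℤ) = (j : ℤ) * ((6 : ℕ) : ℤ) by push_cast; ring, zpow_mul,
        zpow_natCast, zpow_natCast, MulChar.pow_apply' _ (by norm_num : (6 : ℕ) ≠ 0),
        ← map_pow]
    rw [h1, h2, h3, h4]
    simp only [map_mul, hC]
    ring
  rw [Finset.sum_congr rfl expand]
  -- Step 2 : swap the sums and apply orthogonality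
  rw [Finset.sum_comm]
  have step2 : ∀ x : F,
      ∑ j ∈ Finset.range (q - 1), ∑ y : F, (ω ^ j) (x * y⁻¹ * (-1) * lam ^ 6) * C x y
        = ∑ y : F, (if x * y⁻¹ * (-1) * lam ^ 6 = 1 then ((q : ℂ) - 1) else 0) * C x y := by
    intro x
    rw [Finset.sum_comm]
    refine Finset.sum_congr rfl fun y _ => ?_
    rw [← Finset.sum_mul, aux_orth q F hq ω hω]
  rw [Finset.sum_congr rfl fun x _ => step2 x]
  -- Step 3 : collapse the inner sum
  have collapse : ∀ x : F,
      ∑ y : F, (if x * y⁻¹ * (-1) * lam ^ 6 = 1 then ((q : ℂ) - 1) else 0) * C x y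
        = ((q : ℂ) - 1) * C x (x * (-1) * lam ^ 6) := by
    intro x
    by_cases hx : x = 0
    · subst hx
      have hC0 : ∀ y : F, C 0 y = 0 := fun y => by
        simp only [hC, MulChar.map_zero, zero_mul]
      simp [hC0]
    · have hl6 : lam ^ 6 ≠ 0 := pow_ne_zero _ hlam
      set y₀ : F := x * (-1) * lam ^ 6 with hy₀
      have hy₀0 : y₀ ≠ 0 := by
        simp only [hy₀]
        exact mul_ne_zero (mul_ne_zero hx (neg_ne_zero.mpr one_ne_zero)) hl6
      rw [Finset.sum_eq_single y₀ ?side ?notmem]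
      case side =>
        intro y _ hne
        by_cases hy : y = 0
        · subst hy
          rw [if_neg, zero_mul]
          rw [inv_zero, mul_zero, zero_mul, zero_mul]
          exact zero_ne_one
        · rw [if_neg, zero_mul]
          intro hcond
          apply hne
          have := congrArg (fun z : F => z * y) hcond
          simp only [one_mul] at this
          rw [hy₀]
          calc y = x * y⁻¹ * (-1) * lam ^ 6 * y := this.symm
            _ = x * (-1) * lam ^ 6 * (y⁻¹ * y) := by ring
            _ = x * (-1) * lam ^ 6 := by rw [inv_mul_cancel₀ hy, mul_one]
      case notmem => intro h; exact absurd (Finset.mem_univ y₀) h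
      have hcond : x * y₀⁻¹ * (-1) * lam ^ 6 = 1 := by
        rw [hy₀]
        field_simp
      rw [if_pos hcond, mul_comm]
  rw [Finset.sum_congr rfl fun x _ => collapse x]
  -- Step 4 : rewrite the summand
  have hCx : ∀ x : F, C x (x * (-1) * lam ^ 6)
      = (ω ^ b) (-1) * ((ω ^ (a + b)) x * ψ ((1 - lam ^ 6) * x)) := by
    intro x
    have harg : x + x * (-1) * lam ^ 6 = (1 - lam ^ 6) * x := by ring
    simp only [hC]
    rw [← hψadd x (x * (-1) * lam ^ 6), harg]
    rw [show x * (-1) * lam ^ 6 = x * (-1 : F) * lam ^ 6 from rfl]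
    rw [map_mul, map_mul, hb6, mul_one, zpow_add, MulChar.mul_apply]
    ring
  rw [Finset.sum_congr rfl fun x _ => by rw [hCx x]]
  -- Step 5 : reindex and finish
  have hc : (1 : F) - lam ^ 6 ≠ 0 := sub_ne_zero.mpr (Ne.symm hlam6)
  have reindex : ∑ x : F, (ω ^ (a + b)) x * ψ ((1 - lam ^ 6) * x)
      = (ω ^ (-(a + b))) (1 - lam ^ 6) * gaussChar p F (ω ^ (a + b)) := by
    have h1 : ∑ x : F, (ω ^ (a + b)) x * ψ ((1 - lam ^ 6) * x)
        = ∑ x : F, (ω ^ (a + b)) ((1 - lam ^ 6)⁻¹ * x) * ψ x := by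
      refine Fintype.sum_equiv (Equiv.mulLeft₀ (1 - lam ^ 6) hc) _ _ fun x => ?_
      simp only [Equiv.coe_fn_mk, Equiv.mulLeft₀_apply]
      rw [inv_mul_cancel_left₀ hc]
    rw [h1, hgauss]
    simp only [map_mul, mul_assoc]
    rw [← Finset.mul_sum, zpow_neg, MulChar.inv_apply']
  calc ∑ x : F, ((q : ℂ) - 1) *
        ((ω ^ b) (-1) * ((ω ^ (a + b)) x * ψ ((1 - lam ^ 6) * x)))
      = ((q : ℂ) - 1) * (ω ^ b) (-1) *
          ∑ x : F, (ω ^ (a + b)) x * ψ ((1 - lam ^ 6) * x) := by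
        rw [Finset.mul_sum]
        refine Finset.sum_congr rfl fun x _ => ?_
        ring
    _ = ((q : ℂ) - 1) * gaussChar p F (ω ^ (a + b)) * (ω ^ b) (-1) *
          (ω ^ (-(a + b))) (1 - lam ^ 6) := by
        rw [reindex]; ring
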